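/- The SimRank operator is a contraction: let V be finite with all in-neighborhoods nonempty and C ∈ (0,1). Define T on functions s : V × V → ℝ by (Ts)(u,u) = 1 and (Ts)(u,v) = C/(|I(u)||I(v)|) Σ_{a∈I(u)} Σ_{b∈I(v)} s(a,b) for u ≠ v. Then for any s, s', sup_{u,v} |(Ts)(u,v) - (Ts')(u,v)| ≤ C · sup_{u,v} |s(u,v) - s'(u,v)|; hence T has a unique fixed point. -/

import Mathlib

/-- The SimRank operator `T`, defined on functions `s : V × V → ℝ` by
`(Ts)(u,u) = 1` and
`(Ts)(u,v) = C/(|I(u)||I(v)|) Σ_{a∈I(u)} Σ_{b∈I(v)} s(a,b)` for `u ≠ v`, is a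
contraction with factor `C` in the sup norm, and hence has a unique fixed
point. -/
theorem simrank_operator_contraction {V : Type*} [Fintype V] [Nonempty V]
    [DecidableEq V]
    (I : V → Finset V) (hI : ∀ v, (I v).Nonempty)
    (C : ℝ) (hC0 : 0 < C) (hC1 : C < 1)
    (T : (V → V → ℝ) → V → V → ℝ)
    (hT : ∀ s u v, T s u v =
      if u = v then 1
      else C / ((I u).card * (I v).card) * ∑ a ∈ I u, ∑ b ∈ I v, s a b) :
    (∀ s s' : V → V → ℝ,
      (⨆ p : V × V, |T s p.1 p.2 - T s' p.1 p.2|) ≤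
        C * ⨆ p : V × V, |s p.1 p.2 - s' p.1 p.2|) ∧
    (∃! s : V → V → ℝ, T s = s) := by
  have key : ∀ (s s' : V → V → ℝ) (M : ℝ), 0 ≤ M →
      (∀ a b, |s a b - s' a b| ≤ M) →
      ∀ u v, |T s u v - T s' u v| ≤ C * M := by
    intro s s' M hM hbd u v
    rw [hT, hT]
    by_cases h : u = v
    · simp [h, mul_nonneg hC0.le hM]
    · simp only [if_neg h]
      have hcu : (0:ℝ) < (I u).card := by exact_mod_cast (hI u).card_pos
      have hcv : (0:ℝ) < (I v).card := by exact_mod_cast (hI v).card_pos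
      rw [← mul_sub, abs_mul, ← Finset.sum_sub_distrib]
      have h1 : |∑ a ∈ I u, (∑ b ∈ I v, s a b - ∑ b ∈ I v, s' a b)| ≤
          (I u).card * (I v).card * M := by
        calc |∑ a ∈ I u, (∑ b ∈ I v, s a b - ∑ b ∈ I v, s' a b)|
            ≤ ∑ a ∈ I u, |∑ b ∈ I v, s a b - ∑ b ∈ I v, s' a b| :=
              Finset.abs_sum_le_sum_abs _ _
          _ ≤ ∑ a ∈ I u, ∑ b ∈ I v, |s a b - s' a b| := by
              refine Finset.sum_le_sum fun a _ => ?_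
              rw [← Finset.sum_sub_distrib]
              exact Finset.abs_sum_le_sum_abs _ _
          _ ≤ ∑ a ∈ I u, ∑ b ∈ I v, M :=
              Finset.sum_le_sum fun a _ => Finset.sum_le_sum fun b _ => hbd a b
          _ = (I u).card * (I v).card * M := by
              simp [Finset.sum_const, mul_assoc]
      have habs : |C / ((I u).card * (I v).card)| = C / ((I u).card * (I v).card) :=
        abs_of_nonneg (div_nonneg hC0.le (by positivity))
      rw [habs]
      calc C / ((I u).card * (I v).card) *
            |∑ a ∈ I u, (∑ b ∈ I v, s a b - ∑ b ∈ I v, s' a b)|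
          ≤ C / ((I u).card * (I v).card) * ((I u).card * (I v).card * M) :=
            mul_le_mul_of_nonneg_left h1 (by positivity)
        _ = C * M := by field_simp
  have hsup : ∀ s s' : V → V → ℝ,
      (⨆ p : V × V, |T s p.1 p.2 - T s' p.1 p.2|) ≤
        C * ⨆ p : V × V, |s p.1 p.2 - s' p.1 p.2| := by
    intro s s'
    set M := ⨆ p : V × V, |s p.1 p.2 - s' p.1 p.2| with hMdef
    have hbdd : BddAbove (Set.range fun p : V × V => |s p.1 p.2 - s' p.1 p.2|) :=
      (Set.finite_range _).bddAbove
    have hbd : ∀ a b, |s a b - s' a b| ≤ M := fun a b =>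
      le_ciSup hbdd (a, b)
    have hM : 0 ≤ M := le_trans (abs_nonneg _) (hbd (Classical.arbitrary V) (Classical.arbitrary V))
    exact ciSup_le fun p => key s s' M hM hbd p.1 p.2
  refine ⟨hsup, ?_⟩
  have hlip : LipschitzWith ⟨C, hC0.le⟩ T := by
    refine LipschitzWith.of_dist_le_mul fun s s' => ?_
    have hb : (0:ℝ) ≤ C * dist s s' := mul_nonneg hC0.le dist_nonneg
    show dist (T s) (T s') ≤ C * dist s s'
    rw [dist_pi_le_iff hb]
    intro u
    rw [dist_pi_le_iff hb]
    intro v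
    rw [Real.dist_eq]
    refine key s s' (dist s s') dist_nonneg (fun a b => ?_) u v
    have h1 : dist (s a b) (s' a b) ≤ dist (s a) (s' a) := dist_le_pi_dist _ _ b
    have h2 : dist (s a) (s' a) ≤ dist s s' := dist_le_pi_dist s s' a
    rw [Real.dist_eq] at h1
    linarith
  have hcontr : ContractingWith ⟨C, hC0.le⟩ T := ⟨by exact_mod_cast hC1, hlip⟩
  exact ⟨hcontr.fixedPoint, hcontr.fixedPoint_isFixedPt,
    fun x hx => hcontr.fixedPoint_unique hx⟩
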